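/- Let K be a compact subset of the Poincaré disk B² and φ: S¹ → S² a homeomorphism onto its image. Then there is a compact subset L of the Poincaré ball B³ such that for every geodesic γ of B² intersecting K with endpoints u, v ∈ S¹, the geodesic of B³ with endpoints φ(u), φ(v) intersects L. -/

import Mathlib

open Filter Set

/-- The hyperbolic (Poincaré) distance on the open unit ball of a Euclidean space. -/
noncomputable def hDist {E : Type*} [NormedAddCommGroup E] (x y : E) : ℝ :=
  2 * Real.arsinh (‖x - y‖ / Real.sqrt ((1 - ‖x‖ ^ 2) * (1 - ‖y‖ ^ 2)))

/-- A (complete, unit-speed) geodesic line of the Poincaré ball model. -/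
def IsHypLine {E : Type*} [NormedAddCommGroup E] (f : ℝ → E) : Prop :=
  (∀ t, ‖f t‖ < 1) ∧ ∀ s t, hDist (f s) (f t) = |s - t|

section Aux

variable {E : Type*} [NormedAddCommGroup E]

lemma hl_pos {f : ℝ → E} (hf : IsHypLine f) (t : ℝ) : 0 < 1 - ‖f t‖ ^ 2 := by
  have h := hf.1 t
  nlinarith [norm_nonneg (f t)]

lemma hl_sq {f : ℝ → E} (hf : IsHypLine f) (s t : ℝ) :
    ‖f s - f t‖ ^ 2 =
      Real.sinh ((s - t) / 2) ^ 2 * ((1 - ‖f s‖ ^ 2) * (1 - ‖f t‖ ^ 2)) := by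
  have h1 := hl_pos hf s
  have h2 := hl_pos hf t
  have hprod : 0 < (1 - ‖f s‖ ^ 2) * (1 - ‖f t‖ ^ 2) := mul_pos h1 h2
  set D := Real.sqrt ((1 - ‖f s‖ ^ 2) * (1 - ‖f t‖ ^ 2)) with hD
  have hDpos : 0 < D := Real.sqrt_pos.2 hprod
  have hd := hf.2 s t
  unfold hDist at hd
  have harsinh : Real.arsinh (‖f s - f t‖ / D) = |s - t| / 2 := by
    rw [← hD] at hd; linarith
  have hsinh : ‖f s - f t‖ / D = Real.sinh (|s - t| / 2) := by
    rw [← harsinh, Real.sinh_arsinh]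
  have hnorm : ‖f s - f t‖ = Real.sinh (|s - t| / 2) * D :=
    (div_eq_iff hDpos.ne').mp hsinh
  have habs : Real.sinh (|s - t| / 2) ^ 2 = Real.sinh ((s - t) / 2) ^ 2 := by
    rcases abs_cases (s - t) with ⟨h, _⟩ | ⟨h, _⟩ <;> rw [h]
    rw [neg_div, Real.sinh_neg, neg_sq]
  have hD2 : D ^ 2 = (1 - ‖f s‖ ^ 2) * (1 - ‖f t‖ ^ 2) := Real.sq_sqrt hprod.le
  calc ‖f s - f t‖ ^ 2 = Real.sinh (|s - t| / 2) ^ 2 * D ^ 2 := by rw [hnorm]; ring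
    _ = Real.sinh ((s - t) / 2) ^ 2 * ((1 - ‖f s‖ ^ 2) * (1 - ‖f t‖ ^ 2)) := by
        rw [habs, hD2]

lemma hl_cont {f : ℝ → E} (hf : IsHypLine f) : Continuous f := by
  rw [Metric.continuous_iff]
  intro t ε hε
  refine ⟨2 * Real.arsinh ε, by
    have := Real.arsinh_pos_iff.2 hε; linarith, fun s hs => ?_⟩
  have hst : |s - t| < 2 * Real.arsinh ε := by
    rwa [Real.dist_eq] at hs
  have hs2 : Real.sinh (|s - t| / 2) < ε := by
    have : |s - t| / 2 < Real.arsinh ε := by linarith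
    calc Real.sinh (|s - t| / 2) < Real.sinh (Real.arsinh ε) := Real.sinh_lt_sinh.2 this
      _ = ε := Real.sinh_arsinh ε
  have hsnn : 0 ≤ Real.sinh (|s - t| / 2) := by
    rw [Real.sinh_nonneg_iff]; positivity
  have hb : ‖f s - f t‖ ^ 2 ≤ Real.sinh ((s - t) / 2) ^ 2 := by
    have heq := hl_sq hf s t
    have h1 := hl_pos hf s
    have h2 := hl_pos hf t
    have hAB : (1 - ‖f s‖ ^ 2) * (1 - ‖f t‖ ^ 2) ≤ 1 := by
      nlinarith [sq_nonneg ‖f s‖, sq_nonneg ‖f t‖]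
    nlinarith [sq_nonneg (Real.sinh ((s - t) / 2))]
  have habs : Real.sinh ((s - t) / 2) ^ 2 = Real.sinh (|s - t| / 2) ^ 2 := by
    rcases abs_cases (s - t) with ⟨h, _⟩ | ⟨h, _⟩ <;> rw [h]
    rw [neg_div, Real.sinh_neg, neg_sq]
  rw [dist_eq_norm]
  nlinarith [norm_nonneg (f s - f t)]

lemma hl_neg {f : ℝ → E} (hf : IsHypLine f) : IsHypLine (fun t => f (-t)) := by
  refine ⟨fun t => hf.1 (-t), fun s t => ?_⟩
  rw [hf.2 (-s) (-t)]
  rw [abs_sub_comm]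
  congr 1; ring

lemma hl_norm_one {f : ℝ → E} {u : E} (hf : IsHypLine f)
    (hu : Tendsto f atTop (nhds u)) : ‖u‖ = 1 := by
  have key : Tendsto (fun t => 1 - ‖f t‖ ^ 2) atTop (nhds (1 - ‖u‖ ^ 2)) :=
    tendsto_const_nhds.sub ((hu.norm).pow 2)
  have hsinh : Tendsto (fun t : ℝ => Real.sinh (t / 2) ^ 2) atTop atTop := by
    have h1 : Tendsto (fun t : ℝ => t / 2) atTop atTop := tendsto_id.atTop_div_const (by norm_num)
    have h2 : Tendsto Real.sinh atTop atTop := by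
      apply tendsto_atTop_mono' atTop ?_ tendsto_id
      filter_upwards [eventually_ge_atTop (0 : ℝ)] with x hx
      exact Real.self_le_sinh_iff.2 hx
    exact (tendsto_pow_atTop (two_ne_zero)).comp (h2.comp h1)
  have hc0 := hl_pos hf 0
  have key0 : Tendsto (fun t => 1 - ‖f t‖ ^ 2) atTop (nhds 0) := by
    have hg : Tendsto (fun t : ℝ => 4 / (1 - ‖f 0‖ ^ 2) * (Real.sinh (t / 2) ^ 2)⁻¹)
        atTop (nhds 0) := by
      have := hsinh.inv_tendsto_atTop
      simpa using this.const_mul (4 / (1 - ‖f 0‖ ^ 2))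
    apply squeeze_zero' ?_ ?_ hg
    · filter_upwards with t
      exact (hl_pos hf t).le
    · filter_upwards [eventually_ge_atTop (1 : ℝ)] with t ht
      have hsq := hl_sq hf t 0
      have hspos : 0 < Real.sinh (t / 2) := by
        rw [show (0:ℝ) = Real.sinh 0 by simp]
        exact Real.sinh_lt_sinh.2 (by linarith)
      have hb : ‖f t - f 0‖ ≤ 2 := by
        calc ‖f t - f 0‖ ≤ ‖f t‖ + ‖f 0‖ := norm_sub_le _ _
          _ ≤ 2 := by linarith [(hf.1 t).le, (hf.1 0).le]
      rw [sub_zero] at hsq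
      rw [← div_eq_mul_inv, le_div_iff₀ (by positivity), le_div_iff₀ hc0]
      nlinarith [hl_pos hf t, norm_nonneg (f t - f 0)]
  have := tendsto_nhds_unique key key0
  have hu2 : ‖u‖ ^ 2 = 1 := by linarith
  rw [← Real.sqrt_sq (norm_nonneg u), hu2, Real.sqrt_one]

lemma hl_norm_one' {f : ℝ → E} {v : E} (hf : IsHypLine f)
    (hv : Tendsto f atBot (nhds v)) : ‖v‖ = 1 :=
  hl_norm_one (hl_neg hf) (hv.comp tendsto_neg_atTop_atBot)

lemma hl_identity {f : ℝ → E} {u v : E} (hf : IsHypLine f)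
    (hu : Tendsto f atTop (nhds u)) (hv : Tendsto f atBot (nhds v)) (t₀ : ℝ) :
    ‖u - v‖ * (1 - ‖f t₀‖ ^ 2) = 2 * (‖u - f t₀‖ * ‖v - f t₀‖) := by
  have hplus : Tendsto (fun s : ℝ => f (t₀ + s)) atTop (nhds u) :=
    hu.comp (tendsto_atTop_add_const_left atTop t₀ tendsto_id)
  have hminus : Tendsto (fun s : ℝ => f (t₀ - s)) atTop (nhds v) := by
    apply hv.comp
    have := tendsto_atBot_add_const_left atTop t₀ tendsto_neg_atTop_atBot
    exact this.congr fun x => (sub_eq_add_neg t₀ x).symm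
  have hA : Tendsto (fun s : ℝ => ‖f (t₀ + s) - f t₀‖ ^ 2) atTop (nhds (‖u - f t₀‖ ^ 2)) :=
    ((hplus.sub tendsto_const_nhds).norm).pow 2
  have hB : Tendsto (fun s : ℝ => ‖f (t₀ - s) - f t₀‖ ^ 2) atTop (nhds (‖v - f t₀‖ ^ 2)) :=
    ((hminus.sub tendsto_const_nhds).norm).pow 2
  have hC : Tendsto (fun s : ℝ => ‖f (t₀ + s) - f (t₀ - s)‖ ^ 2) atTop
      (nhds (‖u - v‖ ^ 2)) := ((hplus.sub hminus).norm).pow 2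
  have hsinh : Tendsto (fun t : ℝ => Real.sinh (t / 2) ^ 2) atTop atTop := by
    have h1 : Tendsto (fun t : ℝ => t / 2) atTop atTop := tendsto_id.atTop_div_const (by norm_num)
    have h2 : Tendsto Real.sinh atTop atTop := by
      apply tendsto_atTop_mono' atTop ?_ tendsto_id
      filter_upwards [eventually_ge_atTop (0 : ℝ)] with x hx
      exact Real.self_le_sinh_iff.2 hx
    exact (tendsto_pow_atTop (two_ne_zero)).comp (h2.comp h1)
  have hD : Tendsto (fun s : ℝ => 4 + 4 / Real.sinh (s / 2) ^ 2) atTop (nhds 4) := by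
    have := hsinh.inv_tendsto_atTop
    have h4 : Tendsto (fun s : ℝ => 4 / Real.sinh (s / 2) ^ 2) atTop (nhds 0) := by
      simpa [div_eq_mul_inv] using this.const_mul (4 : ℝ)
    simpa using (tendsto_const_nhds (x := (4:ℝ)) (f := atTop)).add h4
  have heq : (fun s : ℝ => ‖f (t₀ + s) - f (t₀ - s)‖ ^ 2 * (1 - ‖f t₀‖ ^ 2) ^ 2)
      =ᶠ[atTop] (fun s : ℝ => (4 + 4 / Real.sinh (s / 2) ^ 2) *
        (‖f (t₀ + s) - f t₀‖ ^ 2 * ‖f (t₀ - s) - f t₀‖ ^ 2)) := by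
    filter_upwards [eventually_gt_atTop (0 : ℝ)] with s hs
    have e1 := hl_sq hf (t₀ + s) t₀
    have e2 := hl_sq hf (t₀ - s) t₀
    have e3 := hl_sq hf (t₀ + s) (t₀ - s)
    rw [show t₀ + s - t₀ = s by ring] at e1
    rw [show t₀ - s - t₀ = -s by ring, neg_div, Real.sinh_neg, neg_sq] at e2
    rw [show t₀ + s - (t₀ - s) = 2 * s by ring] at e3
    have e4 : Real.sinh (2 * s / 2) = 2 * Real.sinh (s / 2) * Real.cosh (s / 2) := by
      rw [show 2 * s / 2 = 2 * (s / 2) by ring, Real.sinh_two_mul]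
    have e5 : Real.cosh (s / 2) ^ 2 = 1 + Real.sinh (s / 2) ^ 2 := Real.cosh_sq' (s / 2)
    have hspos : 0 < Real.sinh (s / 2) := by
      rw [show (0:ℝ) = Real.sinh 0 by simp]
      exact Real.sinh_lt_sinh.2 (by linarith)
    rw [e1, e2, e3, e4]
    have hcan : 4 / Real.sinh (s / 2) ^ 2 * Real.sinh (s / 2) ^ 2 = 4 :=
      div_mul_cancel₀ _ (pow_pos hspos 2).ne'
    linear_combination (4 * Real.sinh (s / 2) ^ 2 *
      ((1 - ‖f (t₀ + s)‖ ^ 2) * (1 - ‖f (t₀ - s)‖ ^ 2)) * (1 - ‖f t₀‖ ^ 2) ^ 2) * e5 -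
      (Real.sinh (s / 2) ^ 2 *
      ((1 - ‖f (t₀ + s)‖ ^ 2) * (1 - ‖f (t₀ - s)‖ ^ 2)) * (1 - ‖f t₀‖ ^ 2) ^ 2) * hcan
  have lim1 : Tendsto (fun s : ℝ => ‖f (t₀ + s) - f (t₀ - s)‖ ^ 2 * (1 - ‖f t₀‖ ^ 2) ^ 2)
      atTop (nhds (‖u - v‖ ^ 2 * (1 - ‖f t₀‖ ^ 2) ^ 2)) := hC.mul_const _
  have lim2 : Tendsto (fun s : ℝ => (4 + 4 / Real.sinh (s / 2) ^ 2) *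
      (‖f (t₀ + s) - f t₀‖ ^ 2 * ‖f (t₀ - s) - f t₀‖ ^ 2)) atTop
      (nhds (4 * (‖u - f t₀‖ ^ 2 * ‖v - f t₀‖ ^ 2))) := hD.mul (hA.mul hB)
  have hmain : ‖u - v‖ ^ 2 * (1 - ‖f t₀‖ ^ 2) ^ 2 =
      4 * (‖u - f t₀‖ ^ 2 * ‖v - f t₀‖ ^ 2) :=
    tendsto_nhds_unique (lim1.congr' heq) lim2
  have h1 : 0 ≤ ‖u - v‖ * (1 - ‖f t₀‖ ^ 2) :=
    mul_nonneg (norm_nonneg _) (hl_pos hf t₀).le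
  have h2 : 0 ≤ 2 * (‖u - f t₀‖ * ‖v - f t₀‖) := by positivity
  have hXY : (‖u - v‖ * (1 - ‖f t₀‖ ^ 2)) ^ 2 = (2 * (‖u - f t₀‖ * ‖v - f t₀‖)) ^ 2 := by
    linear_combination hmain
  calc ‖u - v‖ * (1 - ‖f t₀‖ ^ 2)
      = Real.sqrt ((‖u - v‖ * (1 - ‖f t₀‖ ^ 2)) ^ 2) := (Real.sqrt_sq h1).symm
    _ = Real.sqrt ((2 * (‖u - f t₀‖ * ‖v - f t₀‖)) ^ 2) := by rw [hXY]
    _ = 2 * (‖u - f t₀‖ * ‖v - f t₀‖) := Real.sqrt_sq h2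

lemma hl_sep {f : ℝ → E} {u v : E} (hf : IsHypLine f)
    (hu : Tendsto f atTop (nhds u)) (hv : Tendsto f atBot (nhds v)) (t₀ : ℝ) :
    1 - ‖f t₀‖ ≤ ‖u - v‖ := by
  have hid := hl_identity hf hu hv t₀
  have hu1 : ‖u‖ = 1 := hl_norm_one hf hu
  have hv1 : ‖v‖ = 1 := hl_norm_one' hf hv
  have hb := hf.1 t₀
  have hbn := norm_nonneg (f t₀)
  have h1 : 1 - ‖f t₀‖ ≤ ‖u - f t₀‖ := by
    have := norm_sub_norm_le u (f t₀); linarith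
  have h2 : 1 - ‖f t₀‖ ≤ ‖v - f t₀‖ := by
    have := norm_sub_norm_le v (f t₀); linarith
  nlinarith [norm_nonneg (u - v), mul_le_mul h1 h2 (by linarith) (norm_nonneg _)]

lemma hl_deep {f : ℝ → E} {u v : E} (hf : IsHypLine f)
    (hu : Tendsto f atTop (nhds u)) (hv : Tendsto f atBot (nhds v)) {δ : ℝ}
    (hδ : 0 < δ) (hsep : δ ≤ ‖u - v‖) : ∃ t, ‖f t‖ ^ 2 ≤ 1 - δ ^ 2 / 4 := by
  have hu1 : ‖u‖ = 1 := hl_norm_one hf hu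
  have hv1 : ‖v‖ = 1 := hl_norm_one' hf hv
  have huv2 : ‖u - v‖ ≤ 2 := by
    have := norm_sub_le u v; linarith
  obtain ⟨N, hN⟩ := (Metric.tendsto_nhds.mp hu (δ / 2) (by positivity)).exists_forall_of_atTop
  obtain ⟨M, hM⟩ := (Metric.tendsto_nhds.mp hv (δ / 2) (by positivity)).exists_forall_of_atBot
  set T₁ := max N M
  set T₂ := min N M
  have hT : T₂ ≤ T₁ := min_le_max
  have hgT₁ : ‖u - f T₁‖ < δ / 2 := by
    have := hN T₁ (le_max_left _ _)
    rwa [dist_comm, dist_eq_norm] at this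
  have hgT₂ : δ / 2 ≤ ‖u - f T₂‖ := by
    have hMv : ‖v - f T₂‖ < δ / 2 := by
      have := hM T₂ (min_le_right _ _)
      rwa [dist_comm, dist_eq_norm] at this
    have htri : ‖u - v‖ ≤ ‖u - f T₂‖ + ‖v - f T₂‖ := by
      have := norm_sub_le (u - f T₂) (v - f T₂)
      simpa [sub_sub_sub_cancel_right] using this
    linarith
  have hcont : ContinuousOn (fun t => ‖u - f t‖) (Icc T₂ T₁) :=
    ((continuous_const.sub (hl_cont hf)).norm).continuousOn
  have hmem : δ / 2 ∈ Icc (‖u - f T₁‖) (‖u - f T₂‖) := ⟨hgT₁.le, hgT₂⟩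
  obtain ⟨t, _, ht'⟩ := intermediate_value_Icc' hT hcont hmem
  have ht : ‖u - f t‖ = δ / 2 := ht'
  have h2 : δ / 2 ≤ ‖v - f t‖ := by
    have htri : ‖u - v‖ ≤ ‖u - f t‖ + ‖v - f t‖ := by
      have := norm_sub_le (u - f t) (v - f t)
      simpa [sub_sub_sub_cancel_right] using this
    rw [ht] at htri
    linarith
  have hid := hl_identity hf hu hv t
  rw [ht] at hid
  refine ⟨t, ?_⟩
  nlinarith [hl_pos hf t]

end Aux

/-- Let `K` be a compact subset of the Poincaré disk `B²` and
`φ : S¹ → S²` a homeomorphism onto its image (a continuous injection of the compact circle).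
Then there is a compact `L ⊆ B³` such that for every geodesic of `B²` meeting `K` with
endpoints `u, v`, the geodesic of `B³` with endpoints `φ(u), φ(v)` meets `L`. -/
theorem image_geodesics_meet_compact
    (K : Set (EuclideanSpace ℝ (Fin 2))) (hK : IsCompact K)
    (hK1 : K ⊆ Metric.ball (0 : EuclideanSpace ℝ (Fin 2)) 1)
    (φ : EuclideanSpace ℝ (Fin 2) → EuclideanSpace ℝ (Fin 3))
    (hφc : ContinuousOn φ (Metric.sphere (0 : EuclideanSpace ℝ (Fin 2)) 1))
    (hφi : InjOn φ (Metric.sphere (0 : EuclideanSpace ℝ (Fin 2)) 1))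
    (hφs : MapsTo φ (Metric.sphere (0 : EuclideanSpace ℝ (Fin 2)) 1)
      (Metric.sphere (0 : EuclideanSpace ℝ (Fin 3)) 1)) :
    ∃ L : Set (EuclideanSpace ℝ (Fin 3)), IsCompact L ∧
      L ⊆ Metric.ball (0 : EuclideanSpace ℝ (Fin 3)) 1 ∧
      ∀ (f : ℝ → EuclideanSpace ℝ (Fin 2)) (u v : EuclideanSpace ℝ (Fin 2)),
        IsHypLine f → Tendsto f atTop (nhds u) → Tendsto f atBot (nhds v) →
        (Set.range f ∩ K).Nonempty →
        ∀ h : ℝ → EuclideanSpace ℝ (Fin 3), IsHypLine h →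
          Tendsto h atTop (nhds (φ u)) → Tendsto h atBot (nhds (φ v)) →
          (Set.range h ∩ L).Nonempty := by
  rcases K.eq_empty_or_nonempty with rfl | hne
  · refine ⟨{0}, isCompact_singleton, by simp, ?_⟩
    intro f u v _ _ _ hmeet
    simp at hmeet
  obtain ⟨x₀, hx₀K, hmax'⟩ := hK.exists_isMaxOn hne continuous_norm.continuousOn
  have hmax : ∀ x ∈ K, ‖x‖ ≤ ‖x₀‖ := fun x hx => hmax' hx
  set ρ := ‖x₀‖ with hρdef
  have hρ : ρ < 1 := by
    have := hK1 hx₀K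
    rwa [Metric.mem_ball, dist_zero_right] at this
  set ε := 1 - ρ with hεdef
  have hεpos : 0 < ε := by simp [hεdef]; linarith
  -- uniform separation of φ on ε-separated boundary pairs
  have hsepφ : ∃ δ : ℝ, 0 < δ ∧ δ ≤ 1 ∧
      ∀ x y : EuclideanSpace ℝ (Fin 2), ‖x‖ = 1 → ‖y‖ = 1 → ε ≤ ‖x - y‖ →
        δ ≤ ‖φ x - φ y‖ := by
    set S : Set (EuclideanSpace ℝ (Fin 2) × EuclideanSpace ℝ (Fin 2)) :=
      {p | ‖p.1‖ = 1 ∧ ‖p.2‖ = 1 ∧ ε ≤ ‖p.1 - p.2‖} with hSdef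
    have hSclosed : IsClosed S := by
      apply IsClosed.inter (isClosed_eq (continuous_norm.comp continuous_fst) continuous_const)
      exact IsClosed.inter (isClosed_eq (continuous_norm.comp continuous_snd) continuous_const)
        (isClosed_le continuous_const (continuous_fst.sub continuous_snd).norm)
    have hSsub : S ⊆ (Metric.sphere (0 : EuclideanSpace ℝ (Fin 2)) 1) ×ˢ
        (Metric.sphere (0 : EuclideanSpace ℝ (Fin 2)) 1) := by
      rintro ⟨x, y⟩ ⟨h1, h2, _⟩
      exact ⟨by simpa [mem_sphere_iff_norm] using h1, by simpa [mem_sphere_iff_norm] using h2⟩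
    have hScomp : IsCompact S :=
      ((isCompact_sphere _ _).prod (isCompact_sphere _ _)).of_isClosed_subset hSclosed hSsub
    by_cases hSne : S.Nonempty
    · have hcont : ContinuousOn (fun p : _ × _ => ‖φ p.1 - φ p.2‖) S := by
        apply ContinuousOn.norm
        apply ContinuousOn.sub
        · exact hφc.comp continuous_fst.continuousOn fun p hp => (hSsub hp).1
        · exact hφc.comp continuous_snd.continuousOn fun p hp => (hSsub hp).2
      obtain ⟨p, hpS, hpmin'⟩ := hScomp.exists_isMinOn hSne hcont
      have hpmin : ∀ q ∈ S, ‖φ p.1 - φ p.2‖ ≤ ‖φ q.1 - φ q.2‖ := fun q hq => hpmin' hq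
      have hpne : p.1 ≠ p.2 := by
        intro hEq
        have := hpS.2.2
        rw [hEq] at this
        simp at this
        linarith
      have hm : 0 < ‖φ p.1 - φ p.2‖ := by
        rw [norm_pos_iff, sub_ne_zero]
        intro hEq
        exact hpne (hφi ((hSsub hpS).1) ((hSsub hpS).2) hEq)
      refine ⟨min ‖φ p.1 - φ p.2‖ 1, lt_min hm one_pos, min_le_right _ _, ?_⟩
      intro x y hx hy hxy
      exact le_trans (min_le_left _ _) (hpmin (x, y) ⟨hx, hy, hxy⟩)
    · refine ⟨1, one_pos, le_refl _, ?_⟩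
      intro x y hx hy hxy
      exact absurd ⟨(x, y), hx, hy, hxy⟩ hSne
  obtain ⟨δ, hδpos, hδ1, hδ⟩ := hsepφ
  have hrad : 0 ≤ 1 - δ ^ 2 / 4 := by nlinarith
  refine ⟨Metric.closedBall 0 (Real.sqrt (1 - δ ^ 2 / 4)),
    isCompact_closedBall _ _, ?_, ?_⟩
  · apply Metric.closedBall_subset_ball
    calc Real.sqrt (1 - δ ^ 2 / 4) < Real.sqrt 1 :=
          Real.sqrt_lt_sqrt hrad (by nlinarith)
      _ = 1 := Real.sqrt_one
  intro f u v hf hu hv hmeet h hh hhu hhv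
  obtain ⟨x, hxr, hxK⟩ := hmeet
  obtain ⟨t₀, rfl⟩ := hxr
  have hρt : ‖f t₀‖ ≤ ρ := hmax _ hxK
  have hsep1 : ε ≤ ‖u - v‖ := le_trans (by simp [hεdef]; linarith) (hl_sep hf hu hv t₀)
  have hu1 : ‖u‖ = 1 := hl_norm_one hf hu
  have hv1 : ‖v‖ = 1 := hl_norm_one' hf hv
  have hδuv : δ ≤ ‖φ u - φ v‖ := hδ u v hu1 hv1 hsep1
  obtain ⟨t, ht⟩ := hl_deep hh hhu hhv hδpos hδuv
  refine ⟨h t, mem_range_self t, ?_⟩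
  rw [Metric.mem_closedBall, dist_zero_right]
  rw [show ‖h t‖ = Real.sqrt (‖h t‖ ^ 2) from (Real.sqrt_sq (norm_nonneg _)).symm]
  exact Real.sqrt_le_sqrt ht
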